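/- Let f : ℝ^d → ℝ have global minimum f* and satisfy at every point x: local (φ, ρ)-smoothness and local (λ, ρ)-Lipschitzness. Define κ = min{1/(2φ), ρ/λ}. Then for every x, ‖∇f(x)‖ ≤ (2/κ)·√(f(x) − f*). -/

import Mathlib

set_option maxHeartbeats 1000000

open InnerProductSpace

/-- If `f` is everywhere `(φ, ρ)`-locally smooth and `(λ, ρ)`-locally
Lipschitz, with global minimum `f*`, then with `κ = min{1/(2φ), ρ/λ}` one has
`‖∇f(x)‖ ≤ √(2/κ)·√(f(x) − f*)` for every `x`. -/
theorem gradient_norm_le_sqrt_suboptimality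
    {d : ℕ} (f : EuclideanSpace ℝ (Fin d) → ℝ) (hf : ContDiff ℝ 1 f)
    (xstar : EuclideanSpace ℝ (Fin d)) (hmin : ∀ y, f xstar ≤ f y)
    (φ lam ρ : ℝ) (hφ : 0 < φ) (hlam : 0 < lam) (hρ : 0 < ρ)
    (hsmooth : ∀ x y, ‖y - x‖ ≤ ρ → ‖gradient f y - gradient f x‖ ≤ φ * ‖y - x‖)
    (hlip : ∀ x y, ‖y - x‖ ≤ ρ → |f y - f x| ≤ lam * ‖y - x‖)
    (κ : ℝ) (hκ : κ = min (1 / (2 * φ)) (ρ / lam)) :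
    ∀ x, ‖gradient f x‖ ≤ Real.sqrt (2 / κ) * Real.sqrt (f x - f xstar) := by
  intro x
  have hdiff : Differentiable ℝ f := hf.differentiable one_ne_zero
  have hκpos : 0 < κ := by
    rw [hκ]; exact lt_min (by positivity) (by positivity)
  have hκ1 : κ * φ ≤ 1 / 2 := by
    have : κ ≤ 1 / (2 * φ) := hκ ▸ min_le_left _ _
    calc κ * φ ≤ (1 / (2 * φ)) * φ := by nlinarith
    _ = 1 / 2 := by field_simp
  have hκ2 : κ * lam ≤ ρ := by
    have : κ ≤ ρ / lam := hκ ▸ min_le_right _ _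
    calc κ * lam ≤ (ρ / lam) * lam := by nlinarith
    _ = ρ := by field_simp
  set g := gradient f x with hg
  -- `‖gradient f z‖ = ‖fderiv ℝ f z‖`
  have hng : ∀ z, ‖gradient f z‖ = ‖fderiv ℝ f z‖ := fun z => by
    rw [gradient, LinearIsometryEquiv.norm_map]
  -- gradient norm bounded by lam, via local Lipschitzness on a small ball
  have hglam : ‖g‖ ≤ lam := by
    have hball : LipschitzOnWith lam.toNNReal f (Metric.ball x (ρ / 2)) := by
      rw [lipschitzOnWith_iff_norm_sub_le]
      intro a ha b hb
      have hab : ‖a - b‖ ≤ ρ := by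
        simp only [Metric.mem_ball, dist_eq_norm] at ha hb
        calc ‖a - b‖ = ‖(a - x) + (x - b)‖ := by abel_nf
        _ ≤ ‖a - x‖ + ‖x - b‖ := norm_add_le _ _
        _ ≤ ρ / 2 + ρ / 2 := by
            rw [norm_sub_rev x b]; exact add_le_add ha.le hb.le
        _ = ρ := by ring
      have := hlip b a hab
      rw [Real.norm_eq_abs]
      calc |f a - f b| ≤ lam * ‖a - b‖ := this
      _ = lam.toNNReal * ‖a - b‖ := by rw [Real.coe_toNNReal _ hlam.le]
    have h := norm_fderiv_le_of_lipschitzOn ℝ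
      (Metric.ball_mem_nhds x (by positivity)) hball
    rw [hg, hng]
    calc ‖fderiv ℝ f x‖ ≤ (lam.toNNReal : ℝ) := h
    _ = lam := Real.coe_toNNReal _ hlam.le
  -- descent step
  set y := x - κ • g with hy
  have hyx : y - x = -(κ • g) := by rw [hy]; abel
  have hnyx : ‖y - x‖ = κ * ‖g‖ := by
    rw [hyx, norm_neg, norm_smul, Real.norm_eq_abs, abs_of_pos hκpos]
  have hyxρ : ‖y - x‖ ≤ ρ := by
    rw [hnyx]
    calc κ * ‖g‖ ≤ κ * lam := by nlinarith
    _ ≤ ρ := hκ2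
  -- the auxiliary function F z = f z - ⟪g, z⟫
  set F : EuclideanSpace ℝ (Fin d) → ℝ := fun z => f z - inner ℝ g z with hF
  have hFd : ∀ z, HasFDerivAt F (fderiv ℝ f z - innerSL ℝ g) z := fun z =>
    (hdiff z).hasFDerivAt.sub (innerSL ℝ g).hasFDerivAt
  -- bound on the derivative of F on the segment
  have hbound : ∀ z ∈ segment ℝ x y, ‖fderiv ℝ f z - innerSL ℝ g‖ ≤ φ * (κ * ‖g‖) := by
    intro z hz
    obtain ⟨a, b, ha, hb, hab, hz⟩ := hz
    have hzx : z - x = b • (y - x) := by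
      rw [← hz]; rw [show (a : ℝ) = 1 - b by linarith]
      module
    have hzxn : ‖z - x‖ ≤ ‖y - x‖ := by
      rw [hzx, norm_smul, Real.norm_eq_abs, abs_of_nonneg hb]
      nlinarith [norm_nonneg (y - x)]
    have h1 : ‖gradient f z - g‖ ≤ φ * ‖z - x‖ := hsmooth x z (hzxn.trans hyxρ)
    have heq : ‖fderiv ℝ f z - innerSL ℝ g‖ = ‖gradient f z - g‖ := by
      have h2 : fderiv ℝ f z = toDual ℝ _ (gradient f z) := by
        rw [gradient, LinearIsometryEquiv.apply_symm_apply]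
      have h3 : (innerSL ℝ g : EuclideanSpace ℝ (Fin d) →L[ℝ] ℝ) = toDual ℝ _ g := by
        ext v; simp [toDual_apply_apply]
      rw [h2, h3, ← map_sub, LinearIsometryEquiv.norm_map]
    rw [heq]
    calc ‖gradient f z - g‖ ≤ φ * ‖z - x‖ := h1
    _ ≤ φ * ‖y - x‖ := by nlinarith
    _ = φ * (κ * ‖g‖) := by rw [hnyx]
  have hMVT : ‖F y - F x‖ ≤ φ * (κ * ‖g‖) * ‖y - x‖ :=
    (convex_segment x y).norm_image_sub_le_of_norm_hasFDerivWithin_le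
      (fun z _ => (hFd z).hasFDerivWithinAt) hbound
      (left_mem_segment ℝ x y) (right_mem_segment ℝ x y)
  have hinner : (inner ℝ g y : ℝ) - inner ℝ g x = -(κ * ‖g‖ ^ 2) := by
    rw [← inner_sub_right, hyx, inner_neg_right, inner_smul_right,
      real_inner_self_eq_norm_sq]
  have hFyx : F y - F x = f y - f x + κ * ‖g‖ ^ 2 := by
    simp only [hF]
    have : (inner ℝ g y : ℝ) - inner ℝ g x = -(κ * ‖g‖ ^ 2) := hinner
    linarith
  have hkey : f y ≤ f x - κ * ‖g‖ ^ 2 + φ * κ ^ 2 * ‖g‖ ^ 2 := by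
    have h1 : F y - F x ≤ φ * (κ * ‖g‖) * (κ * ‖g‖) := by
      have h2 := hMVT
      rw [hnyx, Real.norm_eq_abs] at h2
      linarith [le_abs_self (F y - F x)]
    rw [hFyx] at h1; nlinarith
  have hsub : (κ / 2) * ‖g‖ ^ 2 ≤ f x - f xstar := by
    have h1 : f xstar ≤ f y := hmin y
    nlinarith [mul_nonneg (mul_nonneg hκpos.le (sq_nonneg ‖g‖))
      (by linarith : (0:ℝ) ≤ 1 / 2 - κ * φ)]
  -- conclude
  have hfx : 0 ≤ f x - f xstar := by linarith [hmin x]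
  have h2 : ‖g‖ ^ 2 ≤ (2 / κ) * (f x - f xstar) := by
    rw [div_mul_eq_mul_div, le_div_iff₀ hκpos]; nlinarith
  calc ‖g‖ = Real.sqrt (‖g‖ ^ 2) := by rw [Real.sqrt_sq (norm_nonneg g)]
  _ ≤ Real.sqrt ((2 / κ) * (f x - f xstar)) := Real.sqrt_le_sqrt h2
  _ = Real.sqrt (2 / κ) * Real.sqrt (f x - f xstar) := Real.sqrt_mul (by positivity) _
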